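/- A semisimple module over a commutative ring all of whose residue fields R/m are infinite is not the union of finitely many proper submodules. -/

import Mathlib

/-- A semisimple module over a commutative ring all of whose residue fields are infinite
is not the union of finitely many proper submodules. -/
theorem stmt12 (R M : Type*) [CommRing R] [AddCommGroup M] [Module R M]
    [IsSemisimpleModule R M]
    (hres : ∀ m : Ideal R, m.IsMaximal → Infinite (R ⧸ m))
    (ι : Type*) [Finite ι] (N : ι → Submodule R M) (hN : ∀ i, N i ≠ ⊤) :
    (⋃ i, (N i : Set M)) ≠ Set.univ := by
  intro hcovers
  have := Fintype.ofFinite ι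
  have hcov : ⋃ i ∈ (Finset.univ : Finset ι), ((N i : Set M)) = Set.univ := by
    simpa using hcovers
  obtain ⟨k, -, hfi⟩ := Submodule.exists_finiteIndex_of_cover hcov
  have hfin : Finite (M ⧸ N k) := @AddSubgroup.finite_quotient_of_finiteIndex _ _ (N k).toAddSubgroup hfi
  have hnt : Nontrivial (M ⧸ N k) :=
    Submodule.Quotient.nontrivial_iff.mpr (hN k)
  obtain ⟨S, hS⟩ := IsSemisimpleModule.exists_simple_submodule (R := R) (M := M ⧸ N k)
  obtain ⟨I, hI, ⟨e⟩⟩ := isSimpleModule_iff_quot_maximal.mp hS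
  have hinf : Infinite (R ⧸ I) := hres I hI
  have : Infinite S := Infinite.of_injective e.symm e.symm.injective
  exact not_finite S
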